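/- Theorem 1: Let T be a k-uniform supertree on n vertices with m = (n−1)/(k−1) ≥ 2 edges, where k ≥ 3. Then log₂(km) − (log₂ m)/k ≤ I_d^1(T) ≤ log₂(km) − 2(m−1)·log₂ 2/(km) = log₂(km) − 2(m−1)/(km). The first equality holds if and only if some vertex of T has degree m (i.e., T is the hyperstar S^k_{m+1}), and the second equality holds if and only if every vertex of T has degree at most 2. -/

import Mathlib

open Finset

/-- Degree of a vertex in a hypergraph given by its edge set. -/
def hdeg {V : Type*} [DecidableEq V] (E : Finset (Finset V)) (v : V) : ℕ :=
  (E.filter (fun e => v ∈ e)).card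

/-- `h(H) = Σ_{v ∈ V} d(v)·log₂ d(v)`. -/
noncomputable def hval {V : Type*} [Fintype V] [DecidableEq V]
    (E : Finset (Finset V)) : ℝ :=
  ∑ v : V, (hdeg E v : ℝ) * Real.logb 2 (hdeg E v)

/-- The hypergraph is connected: the simple graph on `V` in which `u` is adjacent
to `w` iff `u ≠ w` and some edge contains both is connected. -/
def hconn {V : Type*} (E : Finset (Finset V)) : Prop :=
  (SimpleGraph.fromRel (fun u w => ∃ e ∈ E, u ∈ e ∧ w ∈ e)).Connected


/-- First-order degree-based graph entropy
`I_d^1(H) = log₂(km) − (1/(km))·Σ_v d(v)·log₂ d(v)`. -/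
noncomputable def entropy1 {V : Type*} [Fintype V] [DecidableEq V]
    (k m : ℕ) (E : Finset (Finset V)) : ℝ :=
  Real.logb 2 ((k : ℝ) * m) - (1 / ((k : ℝ) * m)) * hval E

/-! ### Auxiliary lemmas -/

lemma aux_lb_lt (d : ℕ) (hd : 3 ≤ d) :
    2 * ((d : ℝ) - 1) < (d : ℝ) * Real.logb 2 d := by
  rcases eq_or_lt_of_le hd with h3 | h4
  · subst h3
    have h27 : (3:ℝ) * Real.logb 2 3 = Real.logb 2 27 := by
      rw [show (27:ℝ) = 3 ^ (3:ℕ) by norm_num, Real.logb_pow]; push_cast; ring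
    have h16 : (4:ℝ) = Real.logb 2 16 := by
      rw [show (16:ℝ) = 2 ^ (4:ℕ) by norm_num, Real.logb_pow,
        Real.logb_self_eq_one (by norm_num)]; norm_num
    push_cast
    rw [show (2:ℝ) * (3 - 1) = 4 by ring, h16, h27]
    exact Real.logb_lt_logb (by norm_num) (by norm_num) (by norm_num)
  · have h4' : (4:ℕ) ≤ d := h4
    have hc : (4:ℝ) ≤ (d:ℝ) := by exact_mod_cast h4'
    have hlog : (2:ℝ) ≤ Real.logb 2 d := by
      have : (2:ℝ) = Real.logb 2 4 := by
        rw [show (4:ℝ) = 2 ^ (2:ℕ) by norm_num, Real.logb_pow,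
          Real.logb_self_eq_one (by norm_num)]; norm_num
      nth_rewrite 1 [this]
      exact Real.logb_le_logb_of_le (b := 2) (by norm_num) (by norm_num) hc
    nlinarith

lemma aux_lb_le (d : ℕ) : 2 * ((d : ℝ) - 1) ≤ (d : ℝ) * Real.logb 2 d := by
  match d with
  | 0 => simp
  | 1 => simp
  | 2 => rw [show ((2:ℕ):ℝ) = 2 by norm_num, Real.logb_self_eq_one (by norm_num)]; norm_num
  | (n+3) => exact (aux_lb_lt (n+3) (by omega)).le

lemma aux_ub_core (d M : ℝ) (hd1 : 1 ≤ d) (hdm : d ≤ M) (hM : 2 ≤ M) :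
    d * Real.log d ≤ (d - 1) / (M - 1) * (M * Real.log M) := by
  have hM1 : (0:ℝ) < M - 1 := by linarith
  have hne : M - 1 ≠ 0 := ne_of_gt hM1
  have hab : (M - d) / (M - 1) + (d - 1) / (M - 1) = 1 := by field_simp; ring
  have h := Real.convexOn_mul_log.2 (Set.mem_Ici.2 (by norm_num : (0:ℝ) ≤ 1))
    (Set.mem_Ici.2 (by linarith : (0:ℝ) ≤ M))
    (div_nonneg (by linarith) hM1.le) (div_nonneg (by linarith) hM1.le) hab
  simp only [smul_eq_mul, Real.log_one, mul_zero, mul_one, zero_add] at h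
  have hx : (M - d) / (M - 1) + (d - 1) / (M - 1) * M = d := by
    field_simp; ring
  rw [hx] at h
  exact h

lemma aux_ub_core_lt (d M : ℝ) (hd1 : 1 < d) (hdm : d < M) :
    d * Real.log d < (d - 1) / (M - 1) * (M * Real.log M) := by
  have hM1 : (0:ℝ) < M - 1 := by linarith
  have hne : M - 1 ≠ 0 := ne_of_gt hM1
  have hab : (M - d) / (M - 1) + (d - 1) / (M - 1) = 1 := by field_simp; ring
  have h := Real.strictConvexOn_mul_log.2 (Set.mem_Ici.2 (by norm_num : (0:ℝ) ≤ 1))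
    (Set.mem_Ici.2 (by linarith : (0:ℝ) ≤ M)) (by linarith : (1:ℝ) ≠ M)
    (div_pos (by linarith) hM1) (div_pos (by linarith) hM1) hab
  simp only [smul_eq_mul, Real.log_one, mul_zero, mul_one, zero_add] at h
  have hx : (M - d) / (M - 1) + (d - 1) / (M - 1) * M = d := by
    field_simp; ring
  rw [hx] at h
  exact h

lemma aux_ub_le (d m : ℕ) (hm : 2 ≤ m) (hd1 : 1 ≤ d) (hdm : d ≤ m) :
    (d : ℝ) * Real.logb 2 d ≤
      ((d : ℝ) - 1) * ((m : ℝ) * Real.logb 2 m / ((m : ℝ) - 1)) := by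
  have h2 : (0:ℝ) < Real.log 2 := Real.log_pos one_lt_two
  have key := aux_ub_core (d : ℝ) (m : ℝ) (by exact_mod_cast hd1)
    (by exact_mod_cast hdm) (by exact_mod_cast hm)
  simp only [Real.logb]
  calc (d : ℝ) * (Real.log d / Real.log 2)
      = ((d:ℝ) * Real.log d) / Real.log 2 := by ring
    _ ≤ (((d:ℝ) - 1) / ((m:ℝ) - 1) * ((m:ℝ) * Real.log m)) / Real.log 2 := by gcongr
    _ = ((d : ℝ) - 1) * ((m : ℝ) * (Real.log m / Real.log 2) / ((m : ℝ) - 1)) := by ring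

lemma aux_ub_lt (d m : ℕ) (hd1 : 1 < d) (hdm : d < m) :
    (d : ℝ) * Real.logb 2 d <
      ((d : ℝ) - 1) * ((m : ℝ) * Real.logb 2 m / ((m : ℝ) - 1)) := by
  have h2 : (0:ℝ) < Real.log 2 := Real.log_pos one_lt_two
  have key := aux_ub_core_lt (d : ℝ) (m : ℝ) (by exact_mod_cast hd1)
    (by exact_mod_cast hdm)
  simp only [Real.logb]
  calc (d : ℝ) * (Real.log d / Real.log 2)
      = ((d:ℝ) * Real.log d) / Real.log 2 := by ring
    _ < (((d:ℝ) - 1) / ((m:ℝ) - 1) * ((m:ℝ) * Real.log m)) / Real.log 2 := by gcongr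
    _ = ((d : ℝ) - 1) * ((m : ℝ) * (Real.log m / Real.log 2) / ((m : ℝ) - 1)) := by ring

lemma aux_sum_hdeg {V : Type*} [Fintype V] [DecidableEq V]
    (E : Finset (Finset V)) (k : ℕ) (hunif : ∀ e ∈ E, e.card = k) :
    ∑ v : V, hdeg E v = E.card * k := by
  calc ∑ v : V, hdeg E v
      = ∑ v : V, ∑ e ∈ E, if v ∈ e then 1 else 0 := by
        refine Finset.sum_congr rfl fun v _ => ?_
        exact Finset.card_filter _ _
    _ = ∑ e ∈ E, ∑ v : V, if v ∈ e then 1 else 0 := Finset.sum_comm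
    _ = ∑ e ∈ E, e.card := by
        refine Finset.sum_congr rfl fun e _ => ?_
        rw [← Finset.card_filter]
        congr 1
        exact Finset.filter_univ_mem e
    _ = ∑ _e ∈ E, k := Finset.sum_congr rfl hunif
    _ = E.card * k := by rw [Finset.sum_const, smul_eq_mul]

lemma aux_hdeg_pos {V : Type*} [Fintype V] [DecidableEq V]
    (E : Finset (Finset V)) (hc : hconn E) (h2 : 2 ≤ Fintype.card V) (v : V) :
    1 ≤ hdeg E v := by
  by_contra h
  have h0 : hdeg E v = 0 := by omega
  have hno : ∀ e ∈ E, v ∉ e := by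
    intro e he hve
    have : (E.filter (fun e => v ∈ e)).Nonempty := ⟨e, Finset.mem_filter.2 ⟨he, hve⟩⟩
    rw [hdeg] at h0
    simp [Finset.card_eq_zero.1 h0] at this
  have hc' : (SimpleGraph.fromRel (fun u w => ∃ e ∈ E, u ∈ e ∧ w ∈ e)).Connected := hc
  obtain ⟨u, hu⟩ := Fintype.exists_ne_of_one_lt_card (by omega) v
  obtain ⟨p⟩ := hc'.preconnected v u
  cases p with
  | nil => exact hu rfl
  | cons h' q =>
    rw [SimpleGraph.fromRel_adj] at h'
    obtain ⟨-, h''⟩ := h'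
    rcases h'' with ⟨e, he, hve, -⟩ | ⟨e, he, -, hve⟩ <;> exact hno e he hve

/-- Theorem 1: bounds for the entropy of a k-uniform supertree, with
characterization of the equality cases. -/
theorem stmt_11 {V : Type*} [Fintype V] [DecidableEq V] (k n m : ℕ) (hk : 3 ≤ k)
    (E : Finset (Finset V)) (hunif : ∀ e ∈ E, e.card = k)
    (hn : Fintype.card V = n) (hm : E.card = m) (hm2 : 2 ≤ m)
    (hc : hconn E) (hacyc : m * (k - 1) = n - 1) :
    (Real.logb 2 ((k : ℝ) * m) - Real.logb 2 m / k ≤ entropy1 k m E ∧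
      entropy1 k m E ≤
        Real.logb 2 ((k : ℝ) * m) - 2 * ((m : ℝ) - 1) / ((k : ℝ) * m)) ∧
    (entropy1 k m E = Real.logb 2 ((k : ℝ) * m) - Real.logb 2 m / k ↔
      ∃ v : V, hdeg E v = m) ∧
    (entropy1 k m E =
        Real.logb 2 ((k : ℝ) * m) - 2 * ((m : ℝ) - 1) / ((k : ℝ) * m) ↔
      ∀ v : V, hdeg E v ≤ 2) := by
  have hc' : (SimpleGraph.fromRel (fun u w => ∃ e ∈ E, u ∈ e ∧ w ∈ e)).Connected := hc
  have hne : Nonempty V := hc'.nonempty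
  have hn1 : 1 ≤ n := hn ▸ Fintype.card_pos
  have hmul : 2 * 2 ≤ m * (k - 1) := Nat.mul_le_mul hm2 (by omega)
  have hn_eq : n = m * (k - 1) + 1 := by omega
  have hcard2 : 2 ≤ Fintype.card V := by omega
  have hd1 : ∀ v : V, 1 ≤ hdeg E v := fun v => aux_hdeg_pos E hc hcard2 v
  have hdm : ∀ v : V, hdeg E v ≤ m := fun v =>
    hm ▸ Finset.card_le_card (Finset.filter_subset _ _)
  have hsumN : ∑ v : V, hdeg E v = m * k := by rw [aux_sum_hdeg E k hunif, hm]
  have hsumR : ∑ v : V, (hdeg E v : ℝ) = (m : ℝ) * k := by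
    have := congrArg (Nat.cast : ℕ → ℝ) hsumN
    push_cast at this; exact this
  have hm1R : (0:ℝ) < (m:ℝ) - 1 := by
    have : (2:ℝ) ≤ (m:ℝ) := by exact_mod_cast hm2
    linarith
  have hcardR : ((Fintype.card V : ℕ) : ℝ) = (m:ℝ) * (k:ℝ) - (m:ℝ) + 1 := by
    rw [hn, hn_eq]
    push_cast [Nat.cast_sub (show 1 ≤ k by omega)]
    ring
  have S1 : ∑ v : V, ((hdeg E v : ℝ) - 1) = (m : ℝ) - 1 := by
    rw [Finset.sum_sub_distrib, hsumR, Finset.sum_const, Finset.card_univ,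
      nsmul_eq_mul, mul_one]
    rw [hcardR]; ring
  -- notation
  set C : ℝ := (m : ℝ) * Real.logb 2 m / ((m : ℝ) - 1) with hC
  have hub_pt : ∀ v ∈ (univ : Finset V),
      (hdeg E v : ℝ) * Real.logb 2 (hdeg E v) ≤ ((hdeg E v : ℝ) - 1) * C :=
    fun v _ => aux_ub_le (hdeg E v) m hm2 (hd1 v) (hdm v)
  have hgsum : ∑ v : V, ((hdeg E v : ℝ) - 1) * C = (m : ℝ) * Real.logb 2 m := by
    rw [← Finset.sum_mul, S1, hC, mul_comm, div_mul_cancel₀ _ (ne_of_gt hm1R)]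
  have hub_sum : hval E ≤ (m : ℝ) * Real.logb 2 m := by
    rw [hval, ← hgsum]
    exact Finset.sum_le_sum hub_pt
  have hlb_pt : ∀ v ∈ (univ : Finset V),
      2 * ((hdeg E v : ℝ) - 1) ≤ (hdeg E v : ℝ) * Real.logb 2 (hdeg E v) :=
    fun v _ => aux_lb_le (hdeg E v)
  have hfsum : ∑ v : V, 2 * ((hdeg E v : ℝ) - 1) = 2 * ((m : ℝ) - 1) := by
    rw [← Finset.mul_sum, S1]
  have hlb_sum : 2 * ((m : ℝ) - 1) ≤ hval E := by
    rw [hval, ← hfsum]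
    exact Finset.sum_le_sum hlb_pt
  -- equality characterizations on hval
  have hub_eq : hval E = (m : ℝ) * Real.logb 2 m ↔
      ∀ v : V, hdeg E v = 1 ∨ hdeg E v = m := by
    rw [hval, ← hgsum]
    rw [Finset.sum_eq_sum_iff_of_le hub_pt]
    constructor
    · intro h v
      by_contra hcon
      push_neg at hcon
      have h1 : 1 < hdeg E v := lt_of_le_of_ne (hd1 v) (Ne.symm hcon.1)
      have h2 : hdeg E v < m := lt_of_le_of_ne (hdm v) hcon.2
      exact absurd (h v (mem_univ v)) (ne_of_lt (aux_ub_lt _ _ h1 h2))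
    · intro h v _
      rcases h v with h1 | h1 <;> rw [h1]
      · simp
      · rw [hC]
        field_simp
  have hlb_eq : hval E = 2 * ((m : ℝ) - 1) ↔ ∀ v : V, hdeg E v ≤ 2 := by
    rw [hval, ← hfsum, eq_comm]
    rw [Finset.sum_eq_sum_iff_of_le hlb_pt]
    constructor
    · intro h v
      by_contra hcon
      push_neg at hcon
      exact absurd (h v (mem_univ v)) (ne_of_lt (aux_lb_lt _ hcon))
    · intro h v _
      have h1 := hd1 v
      have h2 := h v
      set dv := hdeg E v with hdv
      interval_cases dv
      · simp
      · norm_num [Real.logb_self_eq_one]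
  have hE3 : (∀ v : V, hdeg E v = 1 ∨ hdeg E v = m) ↔ ∃ v : V, hdeg E v = m := by
    constructor
    · intro h
      by_contra hno
      push_neg at hno
      have hall : ∀ v : V, hdeg E v = 1 := fun v => (h v).resolve_right (hno v)
      have hz : ∑ v : V, ((hdeg E v : ℝ) - 1) = 0 :=
        Finset.sum_eq_zero fun v _ => by rw [hall v]; norm_num
      rw [S1] at hz
      have : (m : ℝ) = 1 := by linarith
      have : m = 1 := by exact_mod_cast this
      omega
    · rintro ⟨v0, hv0⟩ v
      by_cases hv : v = v0
      · right; rw [hv, hv0]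
      · left
        have hadd := Finset.add_sum_erase univ (fun w => ((hdeg E w : ℝ) - 1))
          (mem_univ v0)
        rw [S1] at hadd
        have hadd' : ((hdeg E v0 : ℝ) - 1) +
            ∑ x ∈ univ.erase v0, ((hdeg E x : ℝ) - 1) = (m : ℝ) - 1 := hadd
        have hv0R : (hdeg E v0 : ℝ) - 1 = (m : ℝ) - 1 := by rw [hv0]
        have hzero : ∑ w ∈ univ.erase v0, ((hdeg E w : ℝ) - 1) = 0 := by linarith
        have hz := (Finset.sum_eq_zero_iff_of_nonneg fun w _ => by
          have := hd1 w
          have : (1:ℝ) ≤ (hdeg E w : ℝ) := by exact_mod_cast this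
          linarith).1 hzero v (Finset.mem_erase.2 ⟨hv, mem_univ v⟩)
        have : (hdeg E v : ℝ) = 1 := by linarith
        exact_mod_cast this
  -- entropy algebra
  have hk0 : (0:ℝ) < (k:ℝ) := by
    have : 0 < k := by omega
    exact_mod_cast this
  have hm0 : (0:ℝ) < (m:ℝ) := by linarith
  have hc0 : (0:ℝ) < (k:ℝ) * (m:ℝ) := mul_pos hk0 hm0
  have hkey1 : Real.logb 2 (m:ℝ) / (k:ℝ) = 1 / ((k:ℝ) * m) * ((m:ℝ) * Real.logb 2 m) := by
    field_simp
  have hkey2 : 2 * ((m:ℝ) - 1) / ((k:ℝ) * m) = 1 / ((k:ℝ) * m) * (2 * ((m:ℝ) - 1)) := by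
    ring
  have hent : entropy1 k m E = Real.logb 2 ((k:ℝ) * m) - 1 / ((k:ℝ) * m) * hval E := rfl
  have hinv : (0:ℝ) < 1 / ((k:ℝ) * m) := by positivity
  refine ⟨⟨?_, ?_⟩, ?_, ?_⟩
  · rw [hent, hkey1]
    have := mul_le_mul_of_nonneg_left hub_sum hinv.le
    linarith
  · rw [hent, hkey2]
    have := mul_le_mul_of_nonneg_left hlb_sum hinv.le
    linarith
  · rw [hent, hkey1, ← hE3, ← hub_eq]
    constructor
    · intro h
      have h2 : 1 / ((k:ℝ)*m) * hval E = 1 / ((k:ℝ)*m) * ((m:ℝ) * Real.logb 2 m) := by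
        linarith
      exact mul_left_cancel₀ (ne_of_gt hinv) h2
    · intro h; rw [h]
  · rw [hent, hkey2, ← hlb_eq]
    constructor
    · intro h
      have h2 : 1 / ((k:ℝ)*m) * hval E = 1 / ((k:ℝ)*m) * (2 * ((m:ℝ) - 1)) := by
        linarith
      exact mul_left_cancel₀ (ne_of_gt hinv) h2
    · intro h; rw [h]
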